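/- If 1 ≤ d₁ ≤ d₂ ≤ m(q−1) and d₁ ≡ d₂ (mod q−1), then PRM_{d₁}(q,m) ⊆ PRM_{d₂}(q,m). -/

import Mathlib

open MvPolynomial

/-- The fixed representatives of the points of projective `m`-space over `F`:
the leftmost nonzero coordinate equals 1. -/
def stdRepP (F : Type*) [Field F] (m : ℕ) : Set (Fin (m + 1) → F) :=
  {v | ∃ i, v i = 1 ∧ ∀ j, j < i → v j = 0}

/-- The evaluation map at the fixed representatives. -/
noncomputable def evP (F : Type*) [Field F] (m : ℕ) :
    MvPolynomial (Fin (m + 1)) F →ₗ[F] (stdRepP F m → F) :=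
  LinearMap.pi fun Q => (aeval (Q : Fin (m + 1) → F)).toLinearMap

/-- The projective Reed–Muller code of degree `d` over projective `m`-space. -/
noncomputable def PRMm (F : Type*) [Field F] (m d : ℕ) : Submodule F (stdRepP F m → F) :=
  (homogeneousSubmodule (Fin (m + 1)) F d).map (evP F m)

/-- If `1 ≤ d₁ ≤ d₂ ≤ m(q−1)` and `d₁ ≡ d₂ (mod q−1)`, then
`PRM_{d₁}(q,m) ⊆ PRM_{d₂}(q,m)`. -/
theorem stmt1 {F : Type*} [Field F] [Fintype F] (q m d₁ d₂ : ℕ)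
    (hq : Fintype.card F = q) (hm : 1 ≤ m)
    (h1 : 1 ≤ d₁) (h12 : d₁ ≤ d₂) (h2 : d₂ ≤ m * (q - 1))
    (hmod : d₁ ≡ d₂ [MOD q - 1]) :
    PRMm F m d₁ ≤ PRMm F m d₂ := by
  obtain ⟨t, ht⟩ : (q - 1) ∣ d₂ - d₁ := (Nat.modEq_iff_dvd' h12).mp hmod
  set e := d₂ - d₁ with he
  rw [PRMm, PRMm, Submodule.map_le_iff_le_comap,
    homogeneousSubmodule_eq_finsupp_supported, AddMonoidAlgebra.supported_eq_span_single,
    Submodule.span_le]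
  rintro f ⟨a, (ha : a.degree = d₁), rfl⟩
  -- a has a nonzero entry
  have hne : a.support.Nonempty := by
    rw [Finsupp.support_nonempty_iff]
    rintro rfl
    simp [Finsupp.degree] at ha
    omega
  obtain ⟨j, hj⟩ := hne
  have haj : a j ≠ 0 := Finsupp.mem_support_iff.mp hj
  refine ⟨monomial (a + Finsupp.single j e) 1, ?_, ?_⟩
  · apply isHomogeneous_monomial
    rw [Finsupp.degree_eq_weight_one] at ha ⊢
    rw [map_add, ha, Finsupp.weight_apply, Finsupp.sum_single_index (by simp)]
    simp only [Pi.one_apply, smul_eq_mul, mul_one]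
    omega
  · have key : ∀ v : Fin (m+1) → F,
        aeval v (monomial (a + Finsupp.single j e) (1:F)) = aeval v (monomial a (1:F)) := by
      intro v
      rw [aeval_monomial, aeval_monomial]
      congr 1
      rw [Finsupp.prod_add_index (by simp) (by intros; rw [pow_add])]
      rw [Finsupp.prod_single_index (by simp)]
      by_cases hv : v j = 0
      · have h0 : Finsupp.prod a (fun i k => v i ^ k) = 0 :=
          Finsupp.prod_eq_zero_iff.mpr ⟨j, hj, by simp [hv, haj]⟩
        rw [h0, zero_mul]
      · have : v j ^ e = 1 := by
          rw [ht, pow_mul]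
          have : v j ^ (q - 1) = 1 := by
            rw [← hq]; exact FiniteField.pow_card_sub_one_eq_one (v j) hv
          rw [this, one_pow]
        rw [this, mul_one]
    funext v
    show aeval (v : Fin (m+1) → F) _ = aeval (v : Fin (m+1) → F) _
    · exact key v
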